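/- For all integers k ≥ 1 and M ≥ 1, the degree-M pseudoweight enumerating function of the single parity-check code of length k satisfies B^{(M)}(x) = (1/2)[(P^{(M)}(x))^k + (Q^{(M)}(x))^k] − T^{(M)}(x), as an identity of polynomials in x_1, …, x_M. -/

import Mathlib

open Finset MvPolynomial

/-- The multinomial coefficient `C(k; u) = k! / ((k - ∑ u_r)! ∏ u_r!)`,
taken to be `0` when `∑ u_r > k`.  Index `r : Fin N` represents coordinate `r+1`. -/
def multCoeff (k : ℕ) {N : ℕ} (u : Fin N → ℕ) : ℕ :=
  if ∑ r, u r ≤ k then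
    Nat.factorial k / (Nat.factorial (k - ∑ r, u r) * ∏ r, Nat.factorial (u r))
  else 0

/-- `Ufin m` is the set `U^m` of nonnegative integer vectors `v = (v_1, …, v_m)`
(with `M = m + 1`) satisfying `∑_{r=1}^{m} r v_r < m + 1` and
`∑_{r odd} v_r + (m+1)` even. -/
def Ufin (m : ℕ) : Finset (Fin m → ℕ) :=
  (Fintype.piFinset fun _ : Fin m => Finset.range (m + 1)) |>.filter
    (fun v : Fin m → ℕ => (∑ r : Fin m, ((r : ℕ) + 1) * v r) < m + 1 ∧
      Even ((∑ r ∈ Finset.univ.filter (fun r : Fin m => Odd ((r : ℕ) + 1)), v r) + (m + 1)))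

/-- `Tpoly k M` is `T^{(M)}(x)`, defined by the recursion `T^{(1)}(x) = 0` and
`T^{(M)}(x) = T^{(M-1)}(x) + x_M ∑_{v ∈ U^{M-1}} C(k; (1, v_1, …, v_{M-1}))
x_1^{v_1} ⋯ x_{M-1}^{v_{M-1}}`.  Variable `x_r` is represented by `X (r - 1)`. -/
noncomputable def Tpoly (k : ℕ) : ℕ → MvPolynomial ℕ ℝ
  | 0 => 0
  | 1 => 0
  | (m + 2) =>
      Tpoly k (m + 1) +
        MvPolynomial.X (m + 1) *
          ∑ v ∈ Ufin (m + 1),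
            MvPolynomial.C (multCoeff k (Fin.cons 1 v) : ℝ) *
              ∏ r : Fin (m + 1), MvPolynomial.X (r : ℕ) ^ v r

/-- The set `S` of nonnegative integer vectors `u = (u_1, …, u_M)` satisfying
(S-1) `∑ u_r ≤ k`; (S-2) `∑_{r odd} u_r` even; (S-3) if there is `c` with
`u_c = 1` and `u_r = 0` for `c < r ≤ M`, then `c ≤ ∑_{r=1}^{c-1} r u_r`. -/
def Sset (k M : ℕ) : Finset (Fin M → ℕ) :=
  (Fintype.piFinset fun _ : Fin M => Finset.range (k + 1)) |>.filter
    (fun u : Fin M → ℕ => ∑ r, u r ≤ k ∧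
      Even (∑ r ∈ Finset.univ.filter (fun r : Fin M => Odd ((r : ℕ) + 1)), u r) ∧
      ∀ c : Fin M, (u c = 1 ∧ ∀ r : Fin M, c < r → u r = 0) →
        (c : ℕ) + 1 ≤ ∑ r ∈ Finset.univ.filter (fun r : Fin M => r < c), ((r : ℕ) + 1) * u r)

/-- The degree-`M` pseudoweight enumerating function of the length-`k`
single parity-check code: `B^{(M)}(x) = ∑_{u ∈ S} C(k; u) x_1^{u_1} ⋯ x_M^{u_M}`. -/
noncomputable def Bpoly (k M : ℕ) : MvPolynomial ℕ ℝ :=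
  ∑ u ∈ Sset k M, MvPolynomial.C (multCoeff k u : ℝ) * ∏ r : Fin M, MvPolynomial.X (r : ℕ) ^ u r

namespace SPCAux

def Dset (k M : ℕ) : Finset (Fin M → ℕ) :=
  (Fintype.piFinset fun _ : Fin M => Finset.range (k + 1)) |>.filter
    (fun u => ∑ r, u r ≤ k)

variable {R : Type*} [CommSemiring R]

lemma expand (k M : ℕ) (a : Fin M → R) :
    (1 + ∑ r : Fin M, a r) ^ k
      = ∑ u ∈ Dset k M, (multCoeff k u : R) * ∏ r : Fin M, a r ^ u r := by
  have h0 : (1 + ∑ r : Fin M, a r) = ∑ i ∈ univ, (Fin.cons 1 a) i := by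
    rw [Fin.sum_univ_succ]; simp
  rw [h0, Finset.sum_pow_eq_sum_piAntidiag]
  refine Finset.sum_nbij' (fun w => Fin.tail w) (fun u => Fin.cons (k - ∑ r, u r) u)
    ?_ ?_ ?_ ?_ ?_
  · intro w hw
    rw [Finset.mem_piAntidiag] at hw
    have hsum : w 0 + ∑ r : Fin M, Fin.tail w r = k := by
      rw [← hw.1, Fin.sum_univ_succ]; rfl
    have hle : ∑ r : Fin M, Fin.tail w r ≤ k := by omega
    rw [Dset, Finset.mem_filter]
    refine ⟨Fintype.mem_piFinset.2 fun r => ?_, hle⟩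
    rw [Finset.mem_range]
    have : Fin.tail w r ≤ ∑ s : Fin M, Fin.tail w s :=
      Finset.single_le_sum (fun _ _ => Nat.zero_le _) (mem_univ r)
    omega
  · intro u hu
    rw [Dset, Finset.mem_filter] at hu
    rw [Finset.mem_piAntidiag]
    refine ⟨?_, fun i _ => mem_univ i⟩
    rw [Fin.sum_univ_succ]
    simp only [Fin.cons_zero, Fin.cons_succ]
    omega
  · intro w hw
    rw [Finset.mem_piAntidiag] at hw
    have hsum : w 0 + ∑ r : Fin M, Fin.tail w r = k := by
      rw [← hw.1, Fin.sum_univ_succ]; rfl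
    have h2 : k - ∑ r, Fin.tail w r = w 0 := by omega
    rw [h2, Fin.cons_self_tail]
  · intro u _; exact Fin.tail_cons _ _
  · intro w hw
    rw [Finset.mem_piAntidiag] at hw
    have hsum : w 0 + ∑ r : Fin M, Fin.tail w r = k := by
      rw [← hw.1, Fin.sum_univ_succ]; rfl
    have hmc : Nat.multinomial univ w = multCoeff k (Fin.tail w) := by
      rw [Nat.multinomial, multCoeff, if_pos (by omega), hw.1]
      congr 1
      rw [Fin.prod_univ_succ]
      congr 2
      omega
    rw [hmc, Fin.prod_univ_succ]
    simp [Fin.tail]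


def Full (k M : ℕ) : Finset (Fin M → ℕ) :=
  (Dset k M).filter
    (fun u => Even (∑ r ∈ univ.filter (fun r : Fin M => Odd ((r : ℕ) + 1)), u r))

lemma parity (M : ℕ) (u : Fin M → ℕ) :
    Even (∑ r : Fin M, ((r : ℕ) + 1) * u r) ↔
      Even (∑ r ∈ univ.filter (fun r : Fin M => Odd ((r : ℕ) + 1)), u r) := by
  rw [← Finset.sum_filter_add_sum_filter_not univ (fun r : Fin M => Odd ((r : ℕ) + 1))
    (fun r : Fin M => ((r : ℕ) + 1) * u r)]
  have h2 : 2 ∣ ∑ r ∈ univ.filter (fun r : Fin M => ¬ Odd ((r : ℕ) + 1)), ((r : ℕ) + 1) * u r := by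
    refine Finset.dvd_sum fun r hr => ?_
    rw [mem_filter] at hr
    exact Dvd.dvd.mul_right ((Nat.not_odd_iff_even.1 hr.2).two_dvd) _
  have h1 : ∑ r ∈ univ.filter (fun r : Fin M => Odd ((r : ℕ) + 1)), ((r : ℕ) + 1) * u r
      = (∑ r ∈ univ.filter (fun r : Fin M => Odd ((r : ℕ) + 1)), u r)
        + ∑ r ∈ univ.filter (fun r : Fin M => Odd ((r : ℕ) + 1)), (r : ℕ) * u r := by
    rw [← Finset.sum_add_distrib]; exact Finset.sum_congr rfl fun r _ => by ring
  have h3 : 2 ∣ ∑ r ∈ univ.filter (fun r : Fin M => Odd ((r : ℕ) + 1)), (r : ℕ) * u r := by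
    refine Finset.dvd_sum fun r hr => ?_
    rw [mem_filter] at hr
    have : Even (r : ℕ) := Nat.not_odd_iff_even.1 (Nat.odd_add_one.1 hr.2)
    exact this.two_dvd.mul_right _
  rw [h1, Nat.even_iff, Nat.even_iff]
  omega

lemma sign_prod (M : ℕ) (u : Fin M → ℕ) :
    ∏ r : Fin M, (MvPolynomial.C ((-1 : ℝ) ^ ((r : ℕ) + 1)) * X (r : ℕ)) ^ u r
      = MvPolynomial.C ((-1 : ℝ) ^ (∑ r : Fin M, ((r : ℕ) + 1) * u r)) *
          ∏ r : Fin M, (X (r : ℕ) : MvPolynomial ℕ ℝ) ^ u r := by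
  simp_rw [mul_pow, ← map_pow, ← pow_mul]
  rw [Finset.prod_mul_distrib, ← map_prod, Finset.prod_pow_eq_pow_sum]

lemma halfPQ (k M : ℕ) :
    MvPolynomial.C (1 / 2 : ℝ) *
        ((1 + ∑ r : Fin M, X (r : ℕ)) ^ k +
          (1 + ∑ r : Fin M, MvPolynomial.C ((-1 : ℝ) ^ ((r : ℕ) + 1)) * X (r : ℕ)) ^ k)
      = ∑ u ∈ Full k M, MvPolynomial.C (multCoeff k u : ℝ) * ∏ r : Fin M, X (r : ℕ) ^ u r := by
  rw [expand k M (fun r => (X (r : ℕ) : MvPolynomial ℕ ℝ)),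
      expand k M (fun r => MvPolynomial.C ((-1 : ℝ) ^ ((r : ℕ) + 1)) * X (r : ℕ))]
  rw [← Finset.sum_add_distrib, Finset.mul_sum]
  rw [← Finset.sum_filter_add_sum_filter_not (Dset k M)
    (fun u => Even (∑ r ∈ univ.filter (fun r : Fin M => Odd ((r : ℕ) + 1)), u r))]
  have hz : ∑ u ∈ (Dset k M).filter
      (fun u => ¬ Even (∑ r ∈ univ.filter (fun r : Fin M => Odd ((r : ℕ) + 1)), u r)),
      MvPolynomial.C (1 / 2 : ℝ) *
        ((multCoeff k u : MvPolynomial ℕ ℝ) * ∏ r : Fin M, X (r : ℕ) ^ u r +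
          (multCoeff k u : MvPolynomial ℕ ℝ) *
            ∏ r : Fin M, (MvPolynomial.C ((-1 : ℝ) ^ ((r : ℕ) + 1)) * X (r : ℕ)) ^ u r) = 0 := by
    refine Finset.sum_eq_zero fun u hu => ?_
    rw [mem_filter] at hu
    have hodd : Odd (∑ r : Fin M, ((r : ℕ) + 1) * u r) := by
      rw [← Nat.not_even_iff_odd]; exact fun h => hu.2 ((parity M u).1 h)
    rw [sign_prod, hodd.neg_one_pow]
    simp only [map_neg, map_one, neg_one_mul]
    ring
  rw [hz, add_zero]
  refine Finset.sum_congr rfl fun u hu => ?_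
  rw [Full, mem_filter] at hu
  have heven : Even (∑ r : Fin M, ((r : ℕ) + 1) * u r) := (parity M u).2 hu.2
  rw [sign_prod, heven.neg_one_pow, map_one, one_mul]
  have hc : ((multCoeff k u : ℕ) : MvPolynomial ℕ ℝ) = MvPolynomial.C ((multCoeff k u : ℕ) : ℝ) := by
    simp
  rw [hc, ← two_mul, ← mul_assoc]
  have h12 : (MvPolynomial.C (1 / 2 : ℝ)) * 2 = (1 : MvPolynomial ℕ ℝ) := by
    have : (2 : MvPolynomial ℕ ℝ) = MvPolynomial.C (2 : ℝ) :=
      (map_ofNat MvPolynomial.C 2).symm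
    rw [this, ← map_mul]; norm_num
  rw [h12, one_mul]

lemma sum_snoc {M : ℕ} (v : Fin M → ℕ) (b : ℕ) :
    ∑ r : Fin (M + 1), (Fin.snoc v b : Fin (M + 1) → ℕ) r = (∑ r : Fin M, v r) + b := by
  rw [Fin.sum_univ_castSucc]
  simp

lemma prod_comp_snoc {α : Type*} [CommMonoid α] {M : ℕ} (g : ℕ → α) (v : Fin M → ℕ) (b : ℕ) :
    ∏ r : Fin (M + 1), g ((Fin.snoc v b : Fin (M + 1) → ℕ) r) = (∏ r : Fin M, g (v r)) * g b := by
  rw [Fin.prod_univ_castSucc]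
  simp

lemma multCoeff_snoc_zero {k M : ℕ} (v : Fin M → ℕ) :
    multCoeff k (Fin.snoc v 0) = multCoeff k v := by
  unfold multCoeff
  rw [sum_snoc, prod_comp_snoc Nat.factorial]
  simp

lemma multCoeff_snoc_cons {k M : ℕ} (v : Fin M → ℕ) (b : ℕ) :
    multCoeff k (Fin.snoc v b) = multCoeff k (Fin.cons b v) := by
  unfold multCoeff
  rw [sum_snoc, prod_comp_snoc Nat.factorial, Fin.sum_univ_succ, Fin.prod_univ_succ]
  simp only [Fin.cons_zero, Fin.cons_succ]
  rw [add_comm (∑ r : Fin M, v r) b, mul_comm (∏ r : Fin M, Nat.factorial (v r)) (Nat.factorial b)]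

lemma mon_snoc {M : ℕ} (v : Fin M → ℕ) (b : ℕ) :
    ∏ r : Fin (M + 1), (MvPolynomial.X (r : ℕ) : MvPolynomial ℕ ℝ) ^ (Fin.snoc v b : Fin (M + 1) → ℕ) r
      = (∏ r : Fin M, (MvPolynomial.X (r : ℕ) : MvPolynomial ℕ ℝ) ^ v r) * MvPolynomial.X (M : ℕ) ^ b := by
  rw [Fin.prod_univ_castSucc]
  simp

lemma oddsum_split {M : ℕ} (u : Fin (M + 1) → ℕ) :
    ∑ r ∈ univ.filter (fun r : Fin (M + 1) => Odd ((r : ℕ) + 1)), u r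
      = (∑ r ∈ univ.filter (fun r : Fin M => Odd ((r : ℕ) + 1)), u r.castSucc)
        + if Odd (M + 1) then u (Fin.last M) else 0 := by
  rw [Finset.sum_filter, Finset.sum_filter, Fin.sum_univ_castSucc]
  simp

lemma wsum_last {M : ℕ} (u : Fin (M + 1) → ℕ) :
    ∑ r ∈ univ.filter (fun r : Fin (M + 1) => r < Fin.last M), ((r : ℕ) + 1) * u r
      = ∑ r : Fin M, ((r : ℕ) + 1) * u r.castSucc := by
  rw [Finset.sum_filter, Fin.sum_univ_castSucc]
  simp [Fin.castSucc_lt_last]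

lemma wsum_castSucc {M : ℕ} (u : Fin (M + 1) → ℕ) (c : Fin M) :
    ∑ r ∈ univ.filter (fun r : Fin (M + 1) => r < Fin.castSucc c), ((r : ℕ) + 1) * u r
      = ∑ r ∈ univ.filter (fun r : Fin M => r < c), ((r : ℕ) + 1) * u r.castSucc := by
  rw [Finset.sum_filter, Finset.sum_filter, Fin.sum_univ_castSucc]
  have hlast : ¬ (Fin.last M < Fin.castSucc c) := not_lt.2 (Fin.castSucc_lt_last c).le
  simp [Fin.castSucc_lt_castSucc_iff, hlast]

def S3 {M : ℕ} (u : Fin M → ℕ) : Prop :=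
  ∀ c : Fin M, (u c = 1 ∧ ∀ r : Fin M, c < r → u r = 0) →
    (c : ℕ) + 1 ≤ ∑ r ∈ univ.filter (fun r : Fin M => r < c), ((r : ℕ) + 1) * u r

open scoped Classical in
noncomputable def Bad (k M : ℕ) : Finset (Fin M → ℕ) :=
  (Full k M).filter (fun u => ¬ S3 u)

lemma mem_Bad {k M : ℕ} {u : Fin M → ℕ} :
    u ∈ Bad k M ↔ ((∀ r, u r ≤ k) ∧ (∑ r, u r ≤ k)
      ∧ Even (∑ r ∈ univ.filter (fun r : Fin M => Odd ((r : ℕ) + 1)), u r) ∧ ¬ S3 u) := by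
  classical
  simp [Bad, Full, Dset, Fintype.mem_piFinset, Nat.lt_succ_iff, and_assoc]

lemma bad_cases {k M : ℕ} {u : Fin (M + 1) → ℕ} (hu : u ∈ Bad k (M + 1)) :
    (u (Fin.last M) = 1 ∧ ∑ r : Fin M, ((r : ℕ) + 1) * u r.castSucc < M + 1)
    ∨ (u (Fin.last M) = 0 ∧ ¬ S3 (fun r : Fin M => u r.castSucc)) := by
  have hns3 := (mem_Bad.1 hu).2.2.2
  simp only [S3, not_forall, not_le] at hns3
  obtain ⟨c, ⟨hc1, hc0⟩, hlt⟩ := hns3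
  by_cases hc : c = Fin.last M
  · left
    subst hc
    refine ⟨hc1, ?_⟩
    rw [wsum_last] at hlt
    simpa [Fin.val_last] using hlt
  · right
    have hclt : c < Fin.last M := lt_of_le_of_ne (Fin.le_last c) hc
    have hlast0 : u (Fin.last M) = 0 := hc0 _ hclt
    refine ⟨hlast0, ?_⟩
    have hcs : Fin.castSucc (c.castPred hc) = c := Fin.castSucc_castPred c hc
    simp only [S3, not_forall, not_le]
    refine ⟨c.castPred hc, ⟨?_, ?_⟩, ?_⟩
    · show u (Fin.castSucc (c.castPred hc)) = 1
      rw [hcs]; exact hc1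
    · intro r hr
      show u (Fin.castSucc r) = 0
      apply hc0
      rw [← hcs]
      exact Fin.castSucc_lt_castSucc_iff.2 hr
    · rw [← hcs, wsum_castSucc] at hlt
      simpa using hlt

lemma bad_one (k : ℕ) : Bad k 1 = ∅ := by
  classical
  rw [Finset.eq_empty_iff_forall_notMem]
  intro u hu
  obtain ⟨hr, hs, he, hns3⟩ := mem_Bad.1 hu
  simp only [S3, not_forall, not_le] at hns3
  obtain ⟨c, ⟨hc1, _⟩, _⟩ := hns3
  have hc0 : c = 0 := Subsingleton.elim c 0
  rw [hc0] at hc1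
  have hos : (∑ r ∈ univ.filter (fun r : Fin 1 => Odd ((r : ℕ) + 1)), u r) = u 0 := by
    have hf : univ.filter (fun r : Fin 1 => Odd ((r : ℕ) + 1)) = {0} := by
      ext r
      simp [Fin.fin_one_eq_zero r]
    rw [hf, Finset.sum_singleton]
  rw [hos, hc1] at he
  exact (Nat.not_even_iff_odd.2 odd_one) he

lemma bad_step (k M : ℕ) :
    ∑ u ∈ Bad k (M + 1),
        MvPolynomial.C (multCoeff k u : ℝ) * ∏ r : Fin (M + 1), MvPolynomial.X (r : ℕ) ^ u r
      = (∑ u ∈ Bad k M,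
            MvPolynomial.C (multCoeff k u : ℝ) * ∏ r : Fin M, MvPolynomial.X (r : ℕ) ^ u r)
        + MvPolynomial.X (M : ℕ) *
            ∑ v ∈ Ufin M,
              MvPolynomial.C (multCoeff k (Fin.cons 1 v) : ℝ) *
                ∏ r : Fin M, MvPolynomial.X (r : ℕ) ^ v r := by
  classical
  have h1 : ∑ u ∈ (Bad k (M + 1)).filter (fun u => u (Fin.last M) = 1),
      MvPolynomial.C (multCoeff k u : ℝ) * ∏ r : Fin (M + 1), MvPolynomial.X (r : ℕ) ^ u r
      = MvPolynomial.X (M : ℕ) *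
          ∑ v ∈ Ufin M,
            MvPolynomial.C (multCoeff k (Fin.cons 1 v) : ℝ) *
              ∏ r : Fin M, MvPolynomial.X (r : ℕ) ^ v r := by
    have hzero : ∀ v ∈ (Ufin M).filter (fun v => ¬ ((∑ r, v r) + 1 ≤ k)),
        MvPolynomial.C (multCoeff k (Fin.cons 1 v) : ℝ) *
          ∏ r : Fin M, MvPolynomial.X (r : ℕ) ^ v r = 0 := by
      intro v hv
      rw [mem_filter] at hv
      have hm : multCoeff k (Fin.cons 1 v) = 0 := by
        rw [multCoeff, if_neg]
        rw [Fin.sum_cons]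
        omega
      rw [hm]
      simp
    rw [← Finset.sum_filter_add_sum_filter_not (Ufin M) (fun v => (∑ r, v r) + 1 ≤ k),
      mul_add, Finset.sum_eq_zero hzero, mul_zero, add_zero, Finset.mul_sum]
    refine Finset.sum_nbij' (fun u (r : Fin M) => u r.castSucc) (fun v => Fin.snoc v 1)
      ?_ ?_ ?_ ?_ ?_
    · -- hi : image in Ufin filter
      intro u hu
      rw [mem_filter] at hu
      obtain ⟨hub, hu1⟩ := hu
      obtain ⟨hrange, hsum, heven, _⟩ := mem_Bad.1 hub
      have hw : ∑ r : Fin M, ((r : ℕ) + 1) * u r.castSucc < M + 1 :=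
        ((bad_cases hub).resolve_right (fun h => by rw [hu1] at h; exact one_ne_zero h.1)).2
      have hsplit : ∑ r : Fin (M + 1), u r = (∑ r : Fin M, u r.castSucc) + u (Fin.last M) :=
        Fin.sum_univ_castSucc u
      rw [mem_filter]
      constructor
      · rw [Ufin, mem_filter]
        refine ⟨Fintype.mem_piFinset.2 fun r => ?_, hw, ?_⟩
        · rw [Finset.mem_range]
          have h1' : u r.castSucc ≤ ((r : ℕ) + 1) * u r.castSucc :=
            Nat.le_mul_of_pos_left _ (by omega)
          have h2' : ((r : ℕ) + 1) * u r.castSucc ≤ ∑ s : Fin M, ((s : ℕ) + 1) * u s.castSucc :=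
            Finset.single_le_sum (f := fun s : Fin M => ((s : ℕ) + 1) * u s.castSucc)
              (fun _ _ => Nat.zero_le _) (mem_univ r)
          omega
        · show Even ((∑ r ∈ univ.filter (fun r : Fin M => Odd ((r : ℕ) + 1)), u r.castSucc) + (M + 1))
          have hqe := heven
          rw [oddsum_split, hu1] at hqe
          by_cases hM : Odd (M + 1)
          · rw [if_pos hM] at hqe
            rw [Nat.odd_iff] at hM
            rw [Nat.even_iff] at hqe ⊢
            omega
          · rw [if_neg hM] at hqe
            rw [Nat.not_odd_iff_even, Nat.even_iff] at hM
            rw [Nat.even_iff] at hqe ⊢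
            omega
      · rw [hsplit, hu1] at hsum
        exact hsum
    · -- hj : snoc v 1 ∈ Bad filter
      intro v hv
      rw [mem_filter] at hv
      obtain ⟨hvU, hvk⟩ := hv
      rw [Ufin, mem_filter] at hvU
      obtain ⟨hrange', hwv, hevenv⟩ := hvU
      have hlast : (Fin.snoc v 1 : Fin (M + 1) → ℕ) (Fin.last M) = 1 := by simp
      rw [mem_filter]
      refine ⟨mem_Bad.2 ⟨?_, ?_, ?_, ?_⟩, hlast⟩
      · intro r
        rcases Fin.eq_castSucc_or_eq_last r with ⟨j, rfl⟩ | rfl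
        · rw [Fin.snoc_castSucc]
          have : v j ≤ ∑ s, v s := Finset.single_le_sum (fun _ _ => Nat.zero_le _) (mem_univ j)
          omega
        · rw [hlast]; omega
      · rw [sum_snoc]; omega
      · rw [oddsum_split]
        simp only [Fin.snoc_castSucc, Fin.snoc_last]
        by_cases hM : Odd (M + 1)
        · rw [if_pos hM]
          rw [Nat.odd_iff] at hM
          rw [Nat.even_iff] at hevenv ⊢
          omega
        · rw [if_neg hM]
          rw [Nat.not_odd_iff_even, Nat.even_iff] at hM
          rw [Nat.even_iff] at hevenv ⊢
          omega
      · simp only [S3, not_forall, not_le]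
        refine ⟨Fin.last M, ⟨hlast, fun r hr => absurd (Fin.le_last r) (not_le.2 hr)⟩, ?_⟩
        rw [wsum_last]
        simp only [Fin.snoc_castSucc, Fin.val_last]
        omega
    · -- left_inv
      intro u hu
      rw [mem_filter] at hu
      have h := Fin.snoc_init_self u; rw [hu.2] at h; exact h
    · -- right_inv
      intro v _
      funext r
      simp
    · -- values
      intro u hu
      rw [mem_filter] at hu
      have hrepr : u = Fin.snoc (fun r : Fin M => u r.castSucc) 1 := by
        have h := Fin.snoc_init_self u; rw [hu.2] at h; exact h.symm
      conv_lhs => rw [hrepr]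
      rw [multCoeff_snoc_cons, mon_snoc, pow_one]
      ring
  have h0 : ∑ u ∈ (Bad k (M + 1)).filter (fun u => ¬ u (Fin.last M) = 1),
      MvPolynomial.C (multCoeff k u : ℝ) * ∏ r : Fin (M + 1), MvPolynomial.X (r : ℕ) ^ u r
      = ∑ u ∈ Bad k M,
          MvPolynomial.C (multCoeff k u : ℝ) * ∏ r : Fin M, MvPolynomial.X (r : ℕ) ^ u r := by
    refine Finset.sum_nbij' (fun u (r : Fin M) => u r.castSucc) (fun v => Fin.snoc v 0)
      ?_ ?_ ?_ ?_ ?_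
    · intro u hu
      rw [mem_filter] at hu
      obtain ⟨hub, hu1⟩ := hu
      obtain ⟨hrange, hsum, heven, _⟩ := mem_Bad.1 hub
      obtain ⟨hlast0, hns3'⟩ := (bad_cases hub).resolve_left (fun h => hu1 h.1)
      have hsplit : ∑ r : Fin (M + 1), u r = (∑ r : Fin M, u r.castSucc) + u (Fin.last M) :=
        Fin.sum_univ_castSucc u
      refine mem_Bad.2 ⟨fun r => hrange _, ?_, ?_, hns3'⟩
      · omega
      · have hqe := heven
        rw [oddsum_split, hlast0] at hqe
        simpa using hqe
    · intro v hv
      obtain ⟨hrange, hsum, heven, hns3⟩ := mem_Bad.1 hv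
      have hlast : (Fin.snoc v 0 : Fin (M + 1) → ℕ) (Fin.last M) = 0 := by simp
      rw [mem_filter]
      refine ⟨mem_Bad.2 ⟨?_, ?_, ?_, ?_⟩, by simp⟩
      · intro r
        rcases Fin.eq_castSucc_or_eq_last r with ⟨j, rfl⟩ | rfl
        · rw [Fin.snoc_castSucc]; exact hrange j
        · rw [hlast]; omega
      · rw [sum_snoc]; omega
      · rw [oddsum_split]
        simp only [Fin.snoc_castSucc, Fin.snoc_last]
        simpa using heven
      · simp only [S3, not_forall, not_le] at hns3 ⊢
        obtain ⟨c, ⟨hc1, hc0⟩, hlt⟩ := hns3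
        refine ⟨Fin.castSucc c, ⟨by simpa using hc1, ?_⟩, ?_⟩
        · intro r hr
          rcases Fin.eq_castSucc_or_eq_last r with ⟨j, rfl⟩ | rfl
          · rw [Fin.snoc_castSucc]
            exact hc0 j (Fin.castSucc_lt_castSucc_iff.1 hr)
          · exact hlast
        · rw [wsum_castSucc]
          simp only [Fin.snoc_castSucc, Fin.coe_castSucc]
          exact hlt
    · intro u hu
      rw [mem_filter] at hu
      have hlast0 := ((bad_cases hu.1).resolve_left (fun h => hu.2 h.1)).1
      have h := Fin.snoc_init_self u; rw [hlast0] at h; exact h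
    · intro v _
      funext r
      simp
    · intro u hu
      rw [mem_filter] at hu
      have hlast0 := ((bad_cases hu.1).resolve_left (fun h => hu.2 h.1)).1
      have hrepr : u = Fin.snoc (fun r : Fin M => u r.castSucc) 0 := by
        have h := Fin.snoc_init_self u; rw [hlast0] at h; exact h.symm
      conv_lhs => rw [hrepr]
      rw [multCoeff_snoc_zero, mon_snoc, pow_zero, mul_one]
  rw [← Finset.sum_filter_add_sum_filter_not (Bad k (M + 1)) (fun u => u (Fin.last M) = 1),
    h1, h0, add_comm]

lemma L2 (k : ℕ) : ∀ M : ℕ, 1 ≤ M →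
    (∑ u ∈ Bad k M,
        MvPolynomial.C (multCoeff k u : ℝ) * ∏ r : Fin M, MvPolynomial.X (r : ℕ) ^ u r)
      = Tpoly k M := by
  intro M
  induction M with
  | zero => exact fun h => absurd h (by omega)
  | succ n ih =>
    intro _
    rcases Nat.eq_zero_or_pos n with hn | hn
    · subst hn
      rw [bad_one]
      simp [Tpoly]
    · obtain ⟨m, rfl⟩ : ∃ m, n = m + 1 := ⟨n - 1, by omega⟩
      rw [bad_step, ih (by omega)]
      rfl

end SPCAux


/-- For `k, M ≥ 1`,
`B^{(M)}(x) = (1/2)[(P^{(M)}(x))^k + (Q^{(M)}(x))^k] - T^{(M)}(x)`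
where `P^{(M)}(x) = 1 + ∑_r x_r` and `Q^{(M)}(x) = 1 + ∑_r (-1)^r x_r`. -/
theorem stmt_2 (k M : ℕ) (hk : 1 ≤ k) (hM : 1 ≤ M) :
    Bpoly k M =
      MvPolynomial.C (1 / 2 : ℝ) *
          ((1 + ∑ r : Fin M, MvPolynomial.X (r : ℕ)) ^ k +
            (1 + ∑ r : Fin M, MvPolynomial.C ((-1 : ℝ) ^ ((r : ℕ) + 1)) * MvPolynomial.X (r : ℕ)) ^ k)
        - Tpoly k M := by
  classical
  have hsplit := Finset.sum_filter_add_sum_filter_not (SPCAux.Full k M) (fun u => SPCAux.S3 u)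
    (fun u => MvPolynomial.C (multCoeff k u : ℝ) * ∏ r : Fin M, MvPolynomial.X (r : ℕ) ^ u r)
  have hS : (SPCAux.Full k M).filter (fun u => SPCAux.S3 u) = Sset k M := by
    ext u
    rw [Finset.mem_filter]
    simp only [SPCAux.Full, SPCAux.Dset, Sset, SPCAux.S3, Finset.mem_filter,
      Fintype.mem_piFinset]
    tauto
  have hB : (SPCAux.Full k M).filter (fun u => ¬ SPCAux.S3 u) = SPCAux.Bad k M := by
    ext u
    simp [SPCAux.Bad]
  have hT := SPCAux.L2 k M hM
  rw [SPCAux.halfPQ, Bpoly, ← hS, eq_sub_iff_add_eq, ← hT, ← hB]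
  simpa using hsplit
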